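/- For all integers k ≥ 0 and all m ≥ −1, the sequence 𝔠 satisfies 𝔠_{m+kτ} = 𝔠_m · (𝔠_{τ−1})^k. -/

import Mathlib

set_option maxHeartbeats 1000000

theorem stmt_0
    (N : ℕ) (hN : 0 < N) (hNsq : ¬ IsSquare N)
    (a P Q : ℤ → ℤ)
    (hP0 : P 0 = 0) (hQ0 : Q 0 = 1)
    (ha : ∀ m : ℤ, 0 ≤ m → a m = ⌊((P m : ℝ) + Real.sqrt N) / (Q m : ℝ)⌋)
    (hPrec : ∀ m : ℤ, 0 ≤ m → P (m + 1) = a m * Q m - P m)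
    (hQrec : ∀ m : ℤ, 0 ≤ m → Q (m + 1) * Q m = (N : ℤ) - P (m + 1) ^ 2)
    (τ : ℕ) (hτ : 0 < τ)
    (hper : ∀ n : ℤ, 1 ≤ n → a (n + τ) = a n)
    (hmin : ∀ τ' : ℕ, 0 < τ' → (∀ n : ℤ, 1 ≤ n → a (n + τ') = a n) → τ ≤ τ')
    (p q : ℤ → ℤ)
    (hp1 : p (-1) = 1) (hp0 : p 0 = a 0)
    (hq1 : q (-1) = 0) (hq0 : q 0 = 1)
    (hprec : ∀ m : ℤ, 1 ≤ m → p m = a m * p (m - 1) + p (m - 2))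
    (hqrec : ∀ m : ℤ, 1 ≤ m → q m = a m * q (m - 1) + q (m - 2))
    :
    ∀ (k : ℕ) (m : ℤ), -1 ≤ m →
      ((p (m + (k : ℤ) * (τ : ℤ)) : ℝ) + (q (m + (k : ℤ) * (τ : ℤ)) : ℝ) * Real.sqrt N)
        = ((p m : ℝ) + (q m : ℝ) * Real.sqrt N)
          * (((p ((τ : ℤ) - 1) : ℝ) + (q ((τ : ℤ) - 1) : ℝ) * Real.sqrt N)) ^ k := by
  set s := Real.sqrt N with hs_def
  have hirr : Irrational s := irrational_sqrt_natCast_iff.mpr hNsq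
  have hN2 : 2 ≤ N := by
    rcases Nat.lt_or_ge N 2 with h | h
    · have hN1 : N = 1 := by omega
      exact absurd (hN1 ▸ IsSquare.one) hNsq
    · exact h
  have hs0 : (0:ℝ) ≤ s := Real.sqrt_nonneg _
  have hs2 : s * s = (N:ℝ) := Real.mul_self_sqrt (by positivity)
  have hs1 : 1 < s := by nlinarith [show (2:ℝ) ≤ (N:ℝ) by exact_mod_cast hN2]
  -- main invariant
  have inv : ∀ n : ℕ, 0 < Q (n:ℤ) ∧ ((Q (n:ℤ) : ℝ) < (P (n:ℤ) : ℝ) + s)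
      ∧ ((P (n:ℤ) : ℝ) < s) := by
    intro n
    induction n with
    | zero =>
      refine ⟨by simp [hQ0], ?_, ?_⟩ <;> simp [hP0, hQ0] <;> linarith
    | succ n ih =>
      obtain ⟨hQpos, hxigt, hPlt⟩ := ih
      have hQR : (0:ℝ) < ((Q (n:ℤ)):ℝ) := by exact_mod_cast hQpos
      have haf := ha n (by positivity)
      have hfl := Int.floor_le (((P (n:ℤ):ℝ) + s) / ((Q (n:ℤ)):ℝ))
      have hfu := Int.lt_floor_add_one (((P (n:ℤ):ℝ) + s) / ((Q (n:ℤ)):ℝ))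
      rw [← haf] at hfl hfu
      have han : 1 ≤ a (n:ℤ) := by
        rw [haf]
        refine Int.le_floor.mpr ?_
        rw [le_div_iff₀ hQR]
        push_cast
        linarith
      have hanR : (1:ℝ) ≤ ((a (n:ℤ)):ℝ) := by exact_mod_cast han
      have hstrict : ((a (n:ℤ)):ℝ) < ((P (n:ℤ):ℝ) + s) / ((Q (n:ℤ)):ℝ) := by
        rcases lt_or_eq_of_le hfl with h | h
        · exact h
        · exfalso
          refine hirr ⟨((a (n:ℤ) * Q (n:ℤ) - P (n:ℤ) : ℤ) : ℚ), ?_⟩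
          have : ((a (n:ℤ)):ℝ) * (Q (n:ℤ)) = (P (n:ℤ):ℝ) + s := by
            rw [h]; field_simp
          push_cast
          linarith
      have hmul : ((a (n:ℤ)):ℝ) * (Q (n:ℤ)) < (P (n:ℤ):ℝ) + s :=
        (lt_div_iff₀ hQR).mp hstrict
      have hmulu : (P (n:ℤ):ℝ) + s < (((a (n:ℤ)):ℝ) + 1) * (Q (n:ℤ)) :=
        (div_lt_iff₀ hQR).mp hfu
      have hP1 := hPrec n (by positivity)
      have hP1R : ((P ((n:ℤ)+1)):ℝ) = (a (n:ℤ)) * (Q (n:ℤ)) - (P (n:ℤ)) := by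
        exact_mod_cast congrArg (fun z : ℤ => (z:ℝ)) hP1
      have h1 : ((P ((n:ℤ)+1)):ℝ) < s := by rw [hP1R]; linarith
      have h2 : s - ((P ((n:ℤ)+1)):ℝ) < (Q (n:ℤ)) := by rw [hP1R]; nlinarith
      have h3 : ((Q (n:ℤ)):ℝ) < ((P ((n:ℤ)+1)):ℝ) + s := by
        rw [hP1R]; nlinarith
      have h4 : P ((n:ℤ)+1) ^ 2 < (N:ℤ) := by
        have : ((P ((n:ℤ)+1)):ℝ) ^ 2 < (N:ℝ) := by nlinarith
        exact_mod_cast this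
      have hQr := hQrec n (by positivity)
      have hQ1pos : 0 < Q ((n:ℤ)+1) := by nlinarith [hQr, h4, hQpos]
      have hQ1R : (0:ℝ) < ((Q ((n:ℤ)+1)):ℝ) := by exact_mod_cast hQ1pos
      have hQrR : ((Q ((n:ℤ)+1)):ℝ) * (Q (n:ℤ)) = (N:ℝ) - ((P ((n:ℤ)+1)):ℝ)^2 := by
        exact_mod_cast congrArg (fun z : ℤ => (z:ℝ)) hQr
      have h5 : ((Q ((n:ℤ)+1)):ℝ) < ((P ((n:ℤ)+1)):ℝ) + s := by nlinarith
      push_cast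
      exact ⟨hQ1pos, h5, h1⟩
  have hQposZ : ∀ n : ℕ, 0 < Q (n:ℤ) := fun n => (inv n).1
  have hQposR : ∀ n : ℕ, (0:ℝ) < ((Q (n:ℤ)):ℝ) := fun n => by exact_mod_cast hQposZ n
  have hQneR : ∀ n : ℕ, ((Q (n:ℤ)):ℝ) ≠ 0 := fun n => (hQposR n).ne'
  have hxgt : ∀ n : ℕ, 1 < ((P (n:ℤ):ℝ) + s) / ((Q (n:ℤ)):ℝ) := by
    intro n
    obtain ⟨h1, h2, h3⟩ := inv n
    rw [lt_div_iff₀ (hQposR n)]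
    linarith
  have han : ∀ n : ℕ, 1 ≤ a (n:ℤ) := by
    intro n
    rw [ha n (by positivity)]
    refine Int.le_floor.mpr ?_
    have := hxgt n
    push_cast
    linarith
  have hanR : ∀ n : ℕ, (1:ℝ) ≤ ((a (n:ℤ)):ℝ) := fun n => by exact_mod_cast han n
  have key0 : ∀ n : ℕ, (((P (n:ℤ)):ℝ) + s - ((a (n:ℤ)):ℝ) * ((Q (n:ℤ)):ℝ)) * (((P ((n:ℤ)+1)):ℝ) + s)
      = ((Q (n:ℤ)):ℝ) * ((Q ((n:ℤ)+1)):ℝ) := by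
    intro n
    have e3 := hPrec n (by positivity)
    have e4 := hQrec n (by positivity)
    have e3R : ((P ((n:ℤ)+1)):ℝ) = ((a (n:ℤ)):ℝ) * ((Q (n:ℤ)):ℝ) - ((P (n:ℤ)):ℝ) := by
      exact_mod_cast congrArg (fun z : ℤ => (z:ℝ)) e3
    have e4R : ((Q ((n:ℤ)+1)):ℝ) * ((Q (n:ℤ)):ℝ) = (N:ℝ) - ((P ((n:ℤ)+1)):ℝ)^2 := by
      exact_mod_cast congrArg (fun z : ℤ => (z:ℝ)) e4
    linear_combination hs2 - e4R + ((((P ((n:ℤ)+1)):ℝ) + s)) * e3R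
  have hcast1 : ∀ n : ℕ, (((n+1:ℕ)):ℤ) = (n:ℤ) + 1 := by intro n; push_cast; ring
  have hPS : ∀ n : ℕ, (0:ℝ) < ((P ((n:ℤ)+1)):ℝ) + s := by
    intro n
    have h := (inv (n+1)).2.1
    have hq := hQposR (n+1)
    push_cast at h hq
    linarith
  have hfr : ∀ n : ℕ, ((P (n:ℤ):ℝ) + s)/((Q (n:ℤ)):ℝ) - ((a (n:ℤ)):ℝ)
      = ((((P ((n:ℤ)+1)):ℝ) + s)/((Q ((n:ℤ)+1)):ℝ))⁻¹ := by
    intro n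
    have h1 : ((Q (n:ℤ)):ℝ) ≠ 0 := hQneR n
    have h2 : ((Q ((n:ℤ)+1)):ℝ) ≠ 0 := by
      have := hQneR (n+1); push_cast at this; exact this
    have hX : ((P (n:ℤ):ℝ) + s)/((Q (n:ℤ)):ℝ) - ((a (n:ℤ)):ℝ)
        = (((P (n:ℤ)):ℝ) + s - ((a (n:ℤ)):ℝ) * ((Q (n:ℤ)):ℝ)) / ((Q (n:ℤ)):ℝ) := by
      field_simp
    rw [inv_div, hX, div_eq_div_iff h1 (hPS n).ne']
    linear_combination key0 n
  set ξ : ℕ → ℝ := fun n : ℕ => ((P (n:ℤ):ℝ) + s)/((Q (n:ℤ)):ℝ) with hξ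
  have hx1 : ∀ n : ℕ, 1 < ξ n := fun n => hxgt n
  have hx0 : ∀ n : ℕ, 0 < ξ n := fun n => lt_trans one_pos (hx1 n)
  have hxne : ∀ n : ℕ, ξ n ≠ 0 := fun n => (hx0 n).ne'
  have hinvlt : ∀ n : ℕ, (ξ n)⁻¹ < 1 := fun n => inv_lt_one_of_one_lt₀ (hx1 n)
  have hinvpos : ∀ n : ℕ, 0 < (ξ n)⁻¹ := fun n => inv_pos.mpr (hx0 n)
  have hfr2 : ∀ n : ℕ, ξ n - ((a (n:ℤ)):ℝ) = (ξ (n+1))⁻¹ := by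
    intro n
    have h := hfr n
    have hu : ξ (n+1) = (((P ((n:ℤ)+1)):ℝ) + s)/((Q ((n:ℤ)+1)):ℝ) := by
      rw [hξ]
      simp only
      rw [hcast1 n]
    rw [hu]
    exact h
  have hprod : ∀ n : ℕ, 2 ≤ ξ n * ξ (n+1) := by
    intro n
    have h := hfr2 n
    have h4 : (ξ (n+1))⁻¹ * ξ (n+1) = 1 := inv_mul_cancel₀ (hxne (n+1))
    have h5 : (ξ n - ((a (n:ℤ)):ℝ)) * ξ (n+1) = 1 := by rw [h]; exact h4
    nlinarith [h5, hx1 (n+1), hanR n, hx0 (n+1)]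
  have hDrec : ∀ n : ℕ, 1 ≤ n → ξ (n+τ) - ξ n = (ξ (n+1+τ))⁻¹ - (ξ (n+1))⁻¹ := by
    intro n hn
    have h1 := hfr2 n
    have h2 := hfr2 (n+τ)
    have h3 : a (((n+τ:ℕ)):ℤ) = a (n:ℤ) := by
      push_cast
      exact hper n (by exact_mod_cast hn)
    rw [h3] at h2
    have e : n + τ + 1 = n + 1 + τ := by omega
    rw [e] at h2
    linarith
  have hDabs : ∀ n : ℕ, 1 ≤ n → |ξ (n+τ) - ξ n| ≤ 1 := by
    intro n hn
    rw [hDrec n hn, abs_le]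
    constructor <;>
      nlinarith [hinvlt (n+1), hinvlt (n+1+τ), hinvpos (n+1), hinvpos (n+1+τ)]
  have hDq : ∀ n : ℕ, 1 ≤ n →
      |ξ (n+τ) - ξ n| * (ξ (n+1) * ξ (n+1+τ)) = |ξ (n+1+τ) - ξ (n+1)| := by
    intro n hn
    have hpos : 0 < ξ (n+1) * ξ (n+1+τ) := mul_pos (hx0 (n+1)) (hx0 (n+1+τ))
    have hmain : ((ξ (n+1+τ))⁻¹ - (ξ (n+1))⁻¹) * (ξ (n+1) * ξ (n+1+τ))
        = ξ (n+1) - ξ (n+1+τ) := by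
      calc ((ξ (n+1+τ))⁻¹ - (ξ (n+1))⁻¹) * (ξ (n+1) * ξ (n+1+τ))
          = ξ (n+1) * ((ξ (n+1+τ))⁻¹ * ξ (n+1+τ)) - ((ξ (n+1))⁻¹ * ξ (n+1)) * ξ (n+1+τ) := by
            ring
        _ = ξ (n+1) - ξ (n+1+τ) := by
            rw [inv_mul_cancel₀ (hxne (n+1+τ)), inv_mul_cancel₀ (hxne (n+1))]
            ring
    rw [hDrec n hn]
    calc |(ξ (n+1+τ))⁻¹ - (ξ (n+1))⁻¹| * (ξ (n+1) * ξ (n+1+τ))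
        = |(ξ (n+1+τ))⁻¹ - (ξ (n+1))⁻¹| * |ξ (n+1) * ξ (n+1+τ)| := by
          rw [abs_of_pos hpos]
      _ = |((ξ (n+1+τ))⁻¹ - (ξ (n+1))⁻¹) * (ξ (n+1) * ξ (n+1+τ))| := (abs_mul _ _).symm
      _ = |ξ (n+1) - ξ (n+1+τ)| := by rw [hmain]
      _ = |ξ (n+1+τ) - ξ (n+1)| := abs_sub_comm _ _
  have hD2 : ∀ n : ℕ, 1 ≤ n →
      |ξ (n+τ) - ξ n| * 4 ≤ |ξ (n+2+τ) - ξ (n+2)| := by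
    intro n hn
    have h1 := hDq n hn
    have h2 := hDq (n+1) (by omega)
    have e1 : n + 1 + 1 = n + 2 := by omega
    have e2 : n + 1 + 1 + τ = n + 2 + τ := by omega
    rw [e1, e2] at h2
    have hp1 : 2 ≤ ξ (n+1) * ξ (n+2) := hprod (n+1)
    have hp2 : 2 ≤ ξ (n+1+τ) * ξ (n+2+τ) := by
      have := hprod (n+1+τ)
      have e3 : n + 1 + τ + 1 = n + 2 + τ := by omega
      rw [e3] at this
      exact this
    have habs0 : 0 ≤ |ξ (n+τ) - ξ n| := abs_nonneg _
    have e : |ξ (n+2+τ) - ξ (n+2)|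
        = |ξ (n+τ) - ξ n| * ((ξ (n+1) * ξ (n+1+τ)) * (ξ (n+2) * ξ (n+2+τ))) := by
      rw [← h2, ← h1]; ring
    have hprod4 : 4 ≤ (ξ (n+1) * ξ (n+1+τ)) * (ξ (n+2) * ξ (n+2+τ)) := by
      nlinarith [hp1, hp2, hx0 (n+1), hx0 (n+2), hx0 (n+1+τ), hx0 (n+2+τ)]
    rw [e]
    exact mul_le_mul_of_nonneg_left hprod4 habs0
  have hDk : ∀ k : ℕ, ∀ n : ℕ, 1 ≤ n → |ξ (n+τ) - ξ n| ≤ (1/4:ℝ)^k := by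
    intro k
    induction k with
    | zero => intro n hn; simpa using hDabs n hn
    | succ k ih =>
      intro n hn
      have h1 := hD2 n hn
      have h2 := ih (n+2) (by omega)
      rw [pow_succ]
      nlinarith
  have hD0 : ξ (1+τ) = ξ 1 := by
    by_contra hne
    have h0 : 0 < |ξ (1+τ) - ξ 1| := abs_pos.mpr (sub_ne_zero.mpr hne)
    obtain ⟨k, hk⟩ := exists_pow_lt_of_lt_one h0 (by norm_num : (1/4:ℝ) < 1)
    exact absurd (hDk k 1 le_rfl) (not_le.mpr hk)
  -- extract equality of P and Q at 1+τ and 1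
  have hxx : (((P ((1:ℤ)+τ)):ℝ) + s)/((Q ((1:ℤ)+τ)):ℝ) = (((P (1:ℤ)):ℝ) + s)/((Q (1:ℤ)):ℝ) := by
    have h := hD0
    rw [hξ] at h
    simp only at h
    push_cast at h
    convert h using 4 <;> push_cast <;> ring
  have hQ1τne : ((Q ((1:ℤ)+τ)):ℝ) ≠ 0 := by
    have := hQneR (1+τ); push_cast at this; exact this
  have hQ1ne : ((Q (1:ℤ)):ℝ) ≠ 0 := by
    have := hQneR 1; push_cast at this; exact this
  have hcross : (((P ((1:ℤ)+τ)):ℝ) + s) * ((Q (1:ℤ)):ℝ)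
      = (((P (1:ℤ)):ℝ) + s) * ((Q ((1:ℤ)+τ)):ℝ) :=
    (div_eq_div_iff hQ1τne hQ1ne).mp hxx
  have hQQ : Q ((1:ℤ)+τ) = Q 1 := by
    by_contra hne
    have hcZ : Q (1:ℤ) - Q ((1:ℤ)+τ) ≠ 0 := fun h => hne (by omega)
    have hcR : ((Q (1:ℤ) - Q ((1:ℤ)+τ) : ℤ):ℝ) ≠ 0 := by exact_mod_cast hcZ
    have hsc : s * ((Q (1:ℤ) - Q ((1:ℤ)+τ) : ℤ):ℝ)
        = ((P (1:ℤ) * Q ((1:ℤ)+τ) - P ((1:ℤ)+τ) * Q (1:ℤ) : ℤ):ℝ) := by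
      push_cast
      linear_combination hcross
    refine hirr ⟨((P (1:ℤ) * Q ((1:ℤ)+τ) - P ((1:ℤ)+τ) * Q (1:ℤ) : ℤ):ℚ)
        / ((Q (1:ℤ) - Q ((1:ℤ)+τ) : ℤ):ℚ), ?_⟩
    push_cast
    push_cast at hsc hcR
    rw [div_eq_iff hcR]
    linear_combination -hsc
  have hPP : P ((1:ℤ)+τ) = P 1 := by
    have h2 : ((P ((1:ℤ)+τ)):ℝ) * ((Q (1:ℤ)):ℝ) = ((P (1:ℤ)):ℝ) * ((Q (1:ℤ)):ℝ) := by
      rw [hQQ] at hcross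
      linear_combination hcross
    have h3 := mul_right_cancel₀ hQ1ne h2
    exact_mod_cast h3
  have hcomm : ((1:ℤ)+τ) = (τ:ℤ)+1 := by ring
  rw [hcomm] at hQQ hPP
  have hP1a : P 1 = a 0 := by
    have := hPrec 0 le_rfl
    simp [hP0, hQ0] at this
    simpa using this
  have hQ1v : Q 1 = (N:ℤ) - a 0 ^ 2 := by
    have := hQrec 0 le_rfl
    simp [hQ0, hP1a] at this
    simpa [hP1a] using this
  have hQ1neZ : Q (1:ℤ) ≠ 0 := by
    have := hQposZ 1; push_cast at this; exact this.ne'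
  have hQτ : Q (τ:ℤ) = 1 := by
    have hτrec := hQrec τ (by positivity)
    rw [hQQ, hPP, hP1a] at hτrec
    -- Q 1 * Q τ = N - a 0 ^2 = Q 1
    have : Q 1 * Q (τ:ℤ) = Q 1 * 1 := by rw [hτrec, hQ1v]; ring
    exact mul_left_cancel₀ hQ1neZ this
  have hPτ : P (τ:ℤ) = a (τ:ℤ) - a 0 := by
    have hτrec := hPrec τ (by positivity)
    rw [hQτ, hPP, hP1a] at hτrec
    omega
  -- the two classical identities
  have key12 : ∀ n : ℕ, p (n:ℤ) = P ((n:ℤ)+1) * q (n:ℤ) + Q ((n:ℤ)+1) * q ((n:ℤ)-1)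
      ∧ (N:ℤ) * q (n:ℤ) = P ((n:ℤ)+1) * p (n:ℤ) + Q ((n:ℤ)+1) * p ((n:ℤ)-1) := by
    intro n
    induction n with
    | zero =>
      push_cast
      norm_num
      constructor
      · rw [hp0, hq0, hq1, hP1a]; ring
      · rw [hq0, hp0, hp1, hP1a, hQ1v]; ring
    | succ n ih =>
      obtain ⟨ih1, ih2⟩ := ih
      have hQn1 : Q ((n:ℤ)+1) ≠ 0 := by
        have := hQposZ (n+1); push_cast at this; exact this.ne'
      have e1 := hprec ((n:ℤ)+1) (by omega)
      have e2 := hqrec ((n:ℤ)+1) (by omega)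
      have e3 := hPrec ((n:ℤ)+1) (by omega)
      have e4 := hQrec ((n:ℤ)+1) (by omega)
      rw [show (n:ℤ)+1-1 = (n:ℤ) from by ring, show (n:ℤ)+1-2 = (n:ℤ)-1 from by ring]
        at e1 e2
      push_cast
      rw [show (n:ℤ)+1-1 = (n:ℤ) from by ring]
      constructor
      · apply mul_left_cancel₀ hQn1
        linear_combination Q ((n:ℤ)+1) * e1 - Q ((n:ℤ)+1) * P ((n:ℤ)+1+1) * e2
          + (q (n:ℤ) * (P ((n:ℤ)+1+1) + a ((n:ℤ)+1) * Q ((n:ℤ)+1) - P ((n:ℤ)+1))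
              - Q ((n:ℤ)+1) * (a ((n:ℤ)+1) * q (n:ℤ) + q ((n:ℤ)-1))) * e3
          - q (n:ℤ) * e4
          + (a ((n:ℤ)+1) * Q ((n:ℤ)+1) - P ((n:ℤ)+1)) * ih1 - ih2
      · apply mul_left_cancel₀ hQn1
        linear_combination Q ((n:ℤ)+1) * (N:ℤ) * e2 - Q ((n:ℤ)+1) * P ((n:ℤ)+1+1) * e1
          + (p (n:ℤ) * (P ((n:ℤ)+1+1) + a ((n:ℤ)+1) * Q ((n:ℤ)+1) - P ((n:ℤ)+1))
              - Q ((n:ℤ)+1) * (a ((n:ℤ)+1) * p (n:ℤ) + p ((n:ℤ)-1))) * e3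
          - p (n:ℤ) * e4
          + (a ((n:ℤ)+1) * Q ((n:ℤ)+1) - P ((n:ℤ)+1)) * ih2 - (N:ℤ) * ih1
  have hτ1 : (1:ℤ) ≤ (τ:ℤ) := by exact_mod_cast hτ
  have hτc : ((τ-1:ℕ):ℤ) = (τ:ℤ)-1 := by omega
  have k1 := (key12 (τ-1)).1
  have k2 := (key12 (τ-1)).2
  rw [hτc, show (τ:ℤ)-1+1 = (τ:ℤ) from by ring, show (τ:ℤ)-1-1 = (τ:ℤ)-2 from by ring,
    hQτ, hPτ] at k1 k2
  have hprecτ := hprec τ hτ1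
  have hqrecτ := hqrec τ hτ1
  have hi : p (τ:ℤ) - a 0 * p ((τ:ℤ)-1) = (N:ℤ) * q ((τ:ℤ)-1) := by
    linear_combination hprecτ - k2
  have hii : q (τ:ℤ) - a 0 * q ((τ:ℤ)-1) = p ((τ:ℤ)-1) := by
    linear_combination hqrecτ - k1
  -- two-step induction for the translation identities
  have hLL : ∀ j : ℕ,
      (p ((j:ℤ)-1+τ) = p ((τ:ℤ)-1) * p ((j:ℤ)-1) + (p (τ:ℤ) - a 0 * p ((τ:ℤ)-1)) * q ((j:ℤ)-1)
        ∧ q ((j:ℤ)-1+τ) = q ((τ:ℤ)-1) * p ((j:ℤ)-1) + (q (τ:ℤ) - a 0 * q ((τ:ℤ)-1)) * q ((j:ℤ)-1))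
      ∧ (p (((j+1:ℕ):ℤ)-1+τ) = p ((τ:ℤ)-1) * p (((j+1:ℕ):ℤ)-1) + (p (τ:ℤ) - a 0 * p ((τ:ℤ)-1)) * q (((j+1:ℕ):ℤ)-1)
        ∧ q (((j+1:ℕ):ℤ)-1+τ) = q ((τ:ℤ)-1) * p (((j+1:ℕ):ℤ)-1) + (q (τ:ℤ) - a 0 * q ((τ:ℤ)-1)) * q (((j+1:ℕ):ℤ)-1)) := by
    intro j
    induction j with
    | zero =>
      push_cast
      norm_num
      rw [show (-1 + (τ:ℤ)) = (τ:ℤ)-1 from by ring]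
      refine ⟨⟨by rw [hp1, hq1]; ring, by rw [hp1, hq1]; ring⟩, ?_, ?_⟩
      · rw [hp0, hq0]; ring
      · rw [hp0, hq0]; ring
    | succ j ihj =>
      refine ⟨ihj.2, ?_, ?_⟩
      all_goals {
        push_cast
        rw [show (j:ℤ)+1+1-1 = (j:ℤ)+1 from by ring]
        obtain ⟨⟨hSjp, hSjq⟩, hS1p, hS1q⟩ := ihj
        push_cast at hSjp hSjq hS1p hS1q
        rw [show (j:ℤ)+1-1 = (j:ℤ) from by ring] at hS1p hS1q
        have ep := hprec ((j:ℤ)+1+τ) (by omega)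
        have eq := hqrec ((j:ℤ)+1+τ) (by omega)
        rw [show (j:ℤ)+1+τ-1 = (j:ℤ)+τ from by ring,
          show (j:ℤ)+1+τ-2 = (j:ℤ)-1+τ from by ring] at ep eq
        have haper : a ((j:ℤ)+1+(τ:ℤ)) = a ((j:ℤ)+1) := hper ((j:ℤ)+1) (by omega)
        rw [haper] at ep eq
        have eqp := hprec ((j:ℤ)+1) (by omega)
        have eqq := hqrec ((j:ℤ)+1) (by omega)
        rw [show (j:ℤ)+1-1 = (j:ℤ) from by ring,
          show (j:ℤ)+1-2 = (j:ℤ)-1 from by ring] at eqp eqq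
        first
        | linear_combination ep + a ((j:ℤ)+1) * hS1p + hSjp
            - p ((τ:ℤ)-1) * eqp - (p (τ:ℤ) - a 0 * p ((τ:ℤ)-1)) * eqq
        | linear_combination eq + a ((j:ℤ)+1) * hS1q + hSjq
            - q ((τ:ℤ)-1) * eqp - (q (τ:ℤ) - a 0 * q ((τ:ℤ)-1)) * eqq
      }
  -- one-step multiplication identity
  have hstep : ∀ m : ℤ, -1 ≤ m →
      ((p (m + (τ:ℤ)) : ℝ) + (q (m + (τ:ℤ)) : ℝ) * s)
        = ((p m : ℝ) + (q m : ℝ) * s)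
          * ((p ((τ:ℤ)-1) : ℝ) + (q ((τ:ℤ)-1) : ℝ) * s) := by
    intro m hm
    obtain ⟨j, hj⟩ : ∃ j : ℕ, m = (j:ℤ) - 1 := ⟨(m+1).toNat, by omega⟩
    subst hj
    obtain ⟨h1, h2⟩ := (hLL j).1
    rw [hi] at h1
    rw [hii] at h2
    have h1R := congrArg (fun z : ℤ => (z:ℝ)) h1
    have h2R := congrArg (fun z : ℤ => (z:ℝ)) h2
    push_cast at h1R h2R
    push_cast
    linear_combination h1R + s * h2R
      - ((q ((τ:ℤ)-1):ℝ) * ((q ((j:ℤ)-1)):ℝ)) * hs2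
  -- final assembly
  intro k
  induction k with
  | zero =>
    intro m hm
    push_cast
    norm_num
  | succ k ih =>
    intro m hm
    have h1 := ih (m + τ) (by omega)
    have h2 := hstep m hm
    have hidx : m + ((k+1:ℕ):ℤ) * τ = m + τ + (k:ℤ) * τ := by push_cast; ring
    rw [hidx, h1, h2, pow_succ]
    ring
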